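/- Let (S,·,*) be a regular ⋆-semigroup that is orthodox (the product of any two idempotents of (S,·) is idempotent) and completely simple, the latter being equivalent to the identity x·x* = x·y·y*·x* for all x,y ∈ S. Then for all a,b ∈ S and all projections f,g of S: a·f·g·b = a·b, and f·g·f = f. -/
import Mathlib


/-- A regular ⋆-semigroup. -/
class RegStarSemigroup (S : Type*) extends Mul S, Star S where
  mul_assoc' : ∀ x y z : S, x * y * z = x * (y * z)
  star_reg : ∀ x : S, x * star x * x = x
  star_star' : ∀ x : S, star (star x) = x
  star_mul' : ∀ x y : S, star (x * y) = star y * star x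

instance RegStarSemigroup.toSemigroup {S : Type*} [RegStarSemigroup S] : Semigroup S where
  mul_assoc := RegStarSemigroup.mul_assoc'

namespace RegStarAux

variable {S : Type*} [RegStarSemigroup S]

local notation "sr" => RegStarSemigroup.star_reg
local notation "ss" => RegStarSemigroup.star_star'
local notation "sm" => RegStarSemigroup.star_mul'

/-- sandwich: for projections u,v, u*v*u = u. -/
theorem sand (cs : ∀ x y : S, x * star x = x * y * star y * star x)
    (u v : S) (hu : u * u = u) (hus : star u = u) (hv : v * v = v) (hvs : star v = v) :
    u * v * u = u := by
  have h := cs u v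
  rw [hus, hvs, hu, mul_assoc u v v, hv] at h
  exact h.symm

theorem coll (e : S) (he : e * e = e) (z : S) : e * (e * z) = e * z := by
  rw [← mul_assoc, he]

theorem sandT (u v : S) (h : u * v * u = u) (z : S) : u * (v * (u * z)) = u * z := by
  rw [← mul_assoc, ← mul_assoc, h]

theorem aux (orth : ∀ e f : S, e * e = e → f * f = f → (e * f) * (e * f) = e * f)
    (cs : ∀ x y : S, x * star x = x * y * star y * star x)
    (p f g q : S) (hp : p * p = p) (hps : star p = p) (hf : f * f = f) (hfs : star f = f)
    (hg : g * g = g) (hgs : star g = g) (hq : q * q = q) (hqs : star q = q) :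
    p * (f * g) * q = p * q := by
  have fgf : f * g * f = f := sand cs f g hf hfs hg hgs
  have gfg : g * f * g = g := sand cs g f hg hgs hf hfs
  have pfp : p * f * p = p := sand cs p f hp hps hf hfs
  have qgq : q * g * q = q := sand cs q g hq hqs hg hgs
  set w : S := p * (f * g) * q with hwdef
  have hfgid : (f * g) * (f * g) = f * g := orth f g hf hg
  have hw : w * w = w := orth (p * (f * g)) q (orth p (f * g) hp hfgid) hq
  have hws : star w = q * (g * f * p) := by
    rw [hwdef, sm, sm, hqs, sm, hfs, hgs, hps, mul_assoc]
  have key1 : p * (f * (g * (q * (g * (f * p))))) = p := by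
    have h := cs (p * (f * g)) q
    rw [hqs, sm, sm, hfs, hgs, hps] at h
    simp only [mul_assoc] at h
    rw [coll g hg, coll q hq, sandT f g fgf] at h
    rw [← mul_assoc p f p, pfp] at h
    exact h.symm
  have key2 : q * (g * (f * (p * (f * (g * q))))) = q := by
    have h := cs (q * (g * f)) p
    rw [hps, sm, sm, hgs, hfs, hqs] at h
    simp only [mul_assoc] at h
    rw [coll f hf, coll p hp, sandT g f gfg] at h
    rw [← mul_assoc q g q, qgq] at h
    exact h.symm
  have hww : w * star w = p := by
    rw [hws, hwdef]
    simp only [mul_assoc]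
    rw [coll q hq]
    exact key1
  have hwsw : star w * w = q := by
    rw [hws, hwdef]
    simp only [mul_assoc]
    rw [coll p hp]
    exact key2
  have hwsid : star w * star w = star w := by rw [← sm, hw]
  have : p * q = w := by
    rw [← hww, ← hwsw]
    simp only [mul_assoc]
    rw [coll (star w) hwsid, ← mul_assoc, sr]
  rw [this, hwdef]

end RegStarAux

theorem stmt13 {S : Type*} [RegStarSemigroup S]
    (orth : ∀ e f : S, e * e = e → f * f = f → (e * f) * (e * f) = e * f)
    (cs : ∀ x y : S, x * star x = x * y * star y * star x) :
    ∀ a b f g : S, f * f = f → star f = f → g * g = g → star g = g →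
      a * f * g * b = a * b ∧ f * g * f = f := by
  intro a b f g hf hfs hg hgs
  have sr := RegStarSemigroup.star_reg (S := S)
  have ss := RegStarSemigroup.star_star' (S := S)
  have sm := RegStarSemigroup.star_mul' (S := S)
  refine ⟨?_, RegStarAux.sand cs f g hf hfs hg hgs⟩
  have hp : (star a * a) * (star a * a) = star a * a := by
    rw [mul_assoc, ← mul_assoc a (star a) a, sr]
  have hps : star (star a * a) = star a * a := by rw [sm, ss]
  have hq : (b * star b) * (b * star b) = b * star b := by
    have h := sr (star b)
    rw [ss] at h
    rw [mul_assoc, ← mul_assoc (star b) b (star b), h]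
  have hqs : star (b * star b) = b * star b := by rw [sm, ss]
  have key := RegStarAux.aux orth cs (star a * a) f g (b * star b)
    hp hps hf hfs hg hgs hq hqs
  have ha : a * (star a * a) = a := by rw [← mul_assoc, sr]
  have hb : (b * star b) * b = b := sr b
  have key' : a * ((star a * a) * (f * g) * (b * star b)) * b
      = a * ((star a * a) * (b * star b)) * b := by rw [key]
  simp only [mul_assoc] at key'
  rw [RegStarAux.sandT a (star a) (sr a), ← mul_assoc b (star b) b, sr b,
    RegStarAux.sandT a (star a) (sr a)] at key'
  simp only [mul_assoc]
  exact key'
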